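/- The probability that a uniformly random d×d 0/1-matrix M has three columns m_i, m_j, m_k (with i, j, k pairwise distinct) satisfying m_i + m_j = m_k is Θ(d^3 (3/8)^d) as d → ∞; i.e., there exist constants 0 < c ≤ C and d_0 such that for all d ≥ d_0 this probability lies between c·d^3(3/8)^d and C·d^3(3/8)^d. -/

import Mathlib

open scoped Classical
open Filter Matrix

noncomputable section

/-- A 0/1-matrix (with `Bool` entries) viewed as a real matrix. -/
def bmToR {m n : Type*} (M : Matrix m n Bool) : Matrix m n ℝ :=
  fun i j => if M i j then 1 else 0

/-- `prob3col d` is the probability that a uniformly random `d × d` 0/1-matrix has three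
pairwise distinct columns `mᵢ, mⱼ, mₖ` with `mᵢ + mⱼ = mₖ` (as vectors in `ℝ^d`). -/
def prob3col (d : ℕ) : ℝ :=
  ((Finset.univ.filter (fun M : Matrix (Fin d) (Fin d) Bool =>
      ∃ i j k : Fin d, i ≠ j ∧ i ≠ k ∧ j ≠ k ∧
        (bmToR M)ᵀ i + (bmToR M)ᵀ j = (bmToR M)ᵀ k)).card : ℝ) / 2 ^ (d * d)

namespace Stmt19

def toR (b : Bool) : ℝ := if b then 1 else 0

lemma toR_inj {a b : Bool} (h : toR a = toR b) : a = b := by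
  cases a <;> cases b <;> simp [toR] at h ⊢

def rowCond {d : ℕ} (i j k : Fin d) (g : Fin d → Bool) : Prop :=
  toR (g i) + toR (g j) = toR (g k)

lemma rowCond_iff (a b c : Bool) :
    toR a + toR b = toR c ↔ ((a && b) = false ∧ c = (a || b)) := by
  cases a <;> cases b <;> cases c <;> simp [toR]

lemma colEq_iff {d : ℕ} (M : Matrix (Fin d) (Fin d) Bool) (i j k : Fin d) :
    ((bmToR M)ᵀ i + (bmToR M)ᵀ j = (bmToR M)ᵀ k) ↔
      ∀ r, rowCond i j k (fun z => M r z) := by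
  rw [funext_iff]
  apply forall_congr'
  intro r
  simp only [Pi.add_apply, Matrix.transpose_apply, bmToR, rowCond, toR]

lemma card_matrix_filter {d : ℕ} (S : Finset (Fin d → Bool))
    (T : Finset (Matrix (Fin d) (Fin d) Bool))
    (hT : ∀ M, M ∈ T ↔ ∀ r, (fun z => M r z) ∈ S) : T.card = S.card ^ d := by
  rw [← Fintype.card_piFinset_const S d]
  apply Finset.card_nbij (fun M => (M : ∀ _ : Fin d, Fin d → Bool))
  · intro a ha
    rw [Finset.mem_coe, Fintype.mem_piFinset]
    intro r
    exact (hT a).1 ha r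
  · intro a _ b _ h
    exact h
  · intro g hg
    refine ⟨g, ?_, rfl⟩
    refine (hT g).2 ?_
    intro r
    exact Fintype.mem_piFinset.1 hg r

lemma card_compl3 {d : ℕ} (i j k : Fin d) (hij : i ≠ j) (hik : i ≠ k) (hjk : j ≠ k) :
    Fintype.card {z : Fin d // z ≠ i ∧ z ≠ j ∧ z ≠ k} = d - 3 := by
  rw [Fintype.card_subtype]
  have h : (Finset.univ.filter fun z : Fin d => z ≠ i ∧ z ≠ j ∧ z ≠ k)
      = Finset.univ \ {i, j, k} := by
    ext z
    simp only [Finset.mem_filter, Finset.mem_univ, true_and, Finset.mem_sdiff,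
      Finset.mem_insert, Finset.mem_singleton]
    tauto
  rw [h, Finset.card_sdiff_of_subset (by simp)]
  have h3 : ({i, j, k} : Finset (Fin d)).card = 3 := by
    rw [Finset.card_insert_of_notMem (by simp [hij, hik]),
      Finset.card_insert_of_notMem (by simp [hjk]), Finset.card_singleton]
  simp [h3]

lemma card_row {d : ℕ} (i j k : Fin d) (hij : i ≠ j) (hik : i ≠ k) (hjk : j ≠ k) :
    (Finset.univ.filter (fun g : Fin d → Bool => rowCond i j k g)).card = 3 * 2 ^ (d - 3) := by
  have key : (Finset.univ.filter (fun g : Fin d → Bool => rowCond i j k g)).card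
      = ((Finset.univ.filter (fun p : Bool × Bool => (p.1 && p.2) = false)) ×ˢ
        (Finset.univ : Finset ({z : Fin d // z ≠ i ∧ z ≠ j ∧ z ≠ k} → Bool))).card := by
    apply Finset.card_nbij' (fun g => ((g i, g j), fun z => g z.1))
      (fun p => fun z => if hz1 : z = i then p.1.1 else if hz2 : z = j then p.1.2
        else if hz3 : z = k then p.1.1 || p.1.2 else p.2 ⟨z, hz1, hz2, hz3⟩)
    · intro g hg
      simp only [Finset.mem_coe, Finset.mem_filter, Finset.mem_univ, true_and] at hg
      rw [rowCond, rowCond_iff] at hg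
      simp only [Finset.mem_coe, Finset.mem_product, Finset.mem_filter, Finset.mem_univ, true_and, and_true]
      exact hg.1
    · intro p hp
      simp only [Finset.mem_coe, Finset.mem_product, Finset.mem_filter, Finset.mem_univ, true_and,
        and_true] at hp
      simp only [Finset.mem_coe, Finset.mem_filter, Finset.mem_univ, true_and]
      rw [rowCond, rowCond_iff]
      constructor
      · simp [hij.symm, hik.symm, hjk.symm, hp]
      · simp [hij.symm, hik.symm, hjk.symm]
    · intro g hg
      simp only [Finset.mem_coe, Finset.mem_filter, Finset.mem_univ, true_and] at hg
      rw [rowCond, rowCond_iff] at hg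
      funext z
      by_cases h1 : z = i
      · simp [h1]
      · by_cases h2 : z = j
        · simp [h1, h2, Ne.symm hij]
        · by_cases h3 : z = k
          · simp [h1, h2, h3, Ne.symm hik, Ne.symm hjk, hg.2]
          · simp [h1, h2, h3]
    · intro p hp
      obtain ⟨⟨a, b⟩, h⟩ := p
      refine Prod.ext (Prod.ext ?_ ?_) (funext fun z => ?_)
      · simp
      · simp [Ne.symm hij]
      · obtain ⟨z, hz1, hz2, hz3⟩ := z
        simp [hz1, hz2, hz3]
  rw [key, Finset.card_product]
  have h1 : (Finset.univ.filter (fun p : Bool × Bool => (p.1 && p.2) = false)).card = 3 := by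
    decide
  rw [h1, Finset.card_univ, Fintype.card_fun, card_compl3 i j k hij hik hjk,
    Fintype.card_bool]

def wvec {d : ℕ} (i j k : Fin d) : Fin d → ℝ := fun z =>
  (if z = i then 1 else 0) + (if z = j then 1 else 0) - (if z = k then 1 else 0)

lemma sum_wvec {d : ℕ} (i j k : Fin d) (x : Fin d → ℝ) :
    ∑ z, wvec i j k z * x z = x i + x j - x k := by
  simp only [wvec, add_mul, sub_mul, ite_mul, one_mul, zero_mul]
  rw [Finset.sum_sub_distrib, Finset.sum_add_distrib]
  simp [Finset.sum_ite_eq']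

lemma rowCond_iff_sum {d : ℕ} (i j k : Fin d) (g : Fin d → Bool) :
    rowCond i j k g ↔ ∑ z, wvec i j k z * toR (g z) = 0 := by
  rw [sum_wvec, rowCond, sub_eq_zero]

lemma exists_pivot {d : ℕ} {w w' : Fin d → ℝ} (hw : w ≠ 0)
    (hind : ∀ lam : ℝ, w' ≠ lam • w) :
    ∃ x y : Fin d, x ≠ y ∧ ∀ δ : Fin d → ℝ, (∀ z, z ≠ x → z ≠ y → δ z = 0) →
      (∑ z, w z * δ z) = 0 → (∑ z, w' z * δ z) = 0 → ∀ z, δ z = 0 := by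
  obtain ⟨x, hx⟩ : ∃ x, w x ≠ 0 := by
    by_contra h
    push_neg at h
    exact hw (funext h)
  set c : ℝ := w' x / w x with hc
  set u : Fin d → ℝ := fun z => w' z - c * w z with hu
  have hux : u x = 0 := by
    simp only [hu, hc]
    field_simp
    ring
  obtain ⟨y, hy⟩ : ∃ y, u y ≠ 0 := by
    by_contra h
    push_neg at h
    apply hind c
    funext z
    have := h z
    simp only [hu] at this
    simp [Pi.smul_apply, smul_eq_mul]
    linarith [this]
  have hxy : x ≠ y := by
    intro h
    rw [h] at hux
    exact hy hux
  refine ⟨x, y, hxy, fun δ hsupp h1 h2 => ?_⟩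
  have hsum : ∀ v : Fin d → ℝ, ∑ z, v z * δ z = v x * δ x + v y * δ y := by
    intro v
    rw [← Finset.sum_subset (Finset.subset_univ {x, y})]
    · rw [Finset.sum_pair hxy]
    · intro z _ hz
      simp only [Finset.mem_insert, Finset.mem_singleton] at hz
      push_neg at hz
      rw [hsupp z hz.1 hz.2, mul_zero]
  have hu2 : ∑ z, u z * δ z = 0 := by
    have : ∀ z, u z * δ z = w' z * δ z - c * (w z * δ z) := by
      intro z; simp only [hu]; ring
    rw [Finset.sum_congr rfl fun z _ => this z, Finset.sum_sub_distrib,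
      ← Finset.mul_sum, h1, h2]
    ring
  have hδy : δ y = 0 := by
    rw [hsum u, hux] at hu2
    simp at hu2
    rcases hu2 with h | h
    · exact absurd h hy
    · exact h
  have hδx : δ x = 0 := by
    rw [hsum w, hδy, mul_zero, add_zero] at h1
    rcases mul_eq_zero.1 h1 with h | h
    · exact absurd h hx
    · exact h
  intro z
  by_cases hzx : z = x
  · rw [hzx]; exact hδx
  · by_cases hzy : z = y
    · rw [hzy]; exact hδy
    · exact hsupp z hzx hzy

lemma wvec_sum {d : ℕ} (i j k : Fin d) :
    ∑ z, wvec i j k z = 1 := by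
  simp only [wvec]
  rw [Finset.sum_sub_distrib, Finset.sum_add_distrib]
  simp [Finset.sum_ite_eq']

lemma wvec_ne_zero {d : ℕ} (i j k : Fin d) (hij : i ≠ j) (hik : i ≠ k) :
    wvec i j k ≠ 0 := by
  intro h
  have := congrFun h i
  simp [wvec, hij, hik] at this

lemma wvec_indep {d : ℕ} {i j k i' j' k' : Fin d} (hij : i < j) (hik : i ≠ k) (hjk : j ≠ k)
    (hij' : i' < j') (hik' : i' ≠ k') (hjk' : j' ≠ k')
    (hne : ¬(i = i' ∧ j = j' ∧ k = k')) (lam : ℝ) : wvec i' j' k' ≠ lam • wvec i j k := by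
  intro h
  have hijne : i ≠ j := ne_of_lt hij
  have hijne' : i' ≠ j' := ne_of_lt hij'
  have hlam : lam = 1 := by
    have h1 := congrArg (fun v => ∑ z, v z) h
    rw [wvec_sum i' j' k'] at h1
    have h2 : ∑ z, (lam • wvec i j k) z = lam := by
      simp only [Pi.smul_apply, smul_eq_mul, ← Finset.mul_sum,
        wvec_sum i j k, mul_one]
    rw [h2] at h1
    exact h1.symm
  rw [hlam, one_smul] at h
  have e : ∀ z, wvec i' j' k' z = wvec i j k z := congrFun h
  have hkk : k' = k := by
    have := e k'
    simp only [wvec, if_pos rfl] at this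
    rw [if_neg (Ne.symm hik'), if_neg (Ne.symm hjk')] at this
    by_contra hkk
    rw [if_neg hkk] at this
    by_cases h1 : k' = i <;> by_cases h2 : k' = j <;>
      simp [h1, h2, hijne, Ne.symm hijne] at this <;> norm_num at this
  have hi' : i' = i ∨ i' = j := by
    have := e i'
    simp only [wvec, if_pos rfl] at this
    rw [if_neg hijne', if_neg hik'] at this
    have hi'k : i' ≠ k := by rw [← hkk]; exact hik'
    rw [if_neg hi'k] at this
    by_cases h1 : i' = i
    · exact Or.inl h1
    · by_cases h2 : i' = j
      · exact Or.inr h2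
      · simp [h1, h2] at this
  have hj' : j' = i ∨ j' = j := by
    have := e j'
    simp only [wvec, if_pos rfl] at this
    rw [if_neg (Ne.symm hijne'), if_neg hjk'] at this
    have hj'k : j' ≠ k := by rw [← hkk]; exact hjk'
    rw [if_neg hj'k] at this
    by_cases h1 : j' = i
    · exact Or.inl h1
    · by_cases h2 : j' = j
      · exact Or.inr h2
      · simp [h1, h2] at this
  rcases hi' with h1 | h1
  · rcases hj' with h2 | h2
    · rw [h1] at hij'; rw [h2] at hij'; exact absurd hij' (lt_irrefl i)
    · exact hne ⟨h1.symm, h2.symm, hkk.symm⟩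
  · rcases hj' with h2 | h2
    · rw [h1, h2] at hij'; exact absurd hij (lt_asymm hij')
    · rw [h1, h2] at hij'; exact absurd hij' (lt_irrefl j)

lemma card_compl2 {d : ℕ} (x y : Fin d) (hxy : x ≠ y) :
    Fintype.card {z : Fin d // z ≠ x ∧ z ≠ y} = d - 2 := by
  rw [Fintype.card_subtype]
  have h : (Finset.univ.filter fun z : Fin d => z ≠ x ∧ z ≠ y)
      = Finset.univ \ {x, y} := by
    ext z
    simp only [Finset.mem_filter, Finset.mem_univ, true_and, Finset.mem_sdiff,
      Finset.mem_insert, Finset.mem_singleton]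
    tauto
  rw [h, Finset.card_sdiff_of_subset (by simp), Finset.card_pair hxy]
  simp

lemma card_two_rows {d : ℕ} {i j k i' j' k' : Fin d} (hij : i < j) (hik : i ≠ k) (hjk : j ≠ k)
    (hij' : i' < j') (hik' : i' ≠ k') (hjk' : j' ≠ k') (hne : ¬(i = i' ∧ j = j' ∧ k = k')) :
    (Finset.univ.filter (fun g : Fin d → Bool => rowCond i j k g ∧ rowCond i' j' k' g)).card
      ≤ 2 ^ (d - 2) := by
  obtain ⟨x, y, hxy, hrig⟩ := exists_pivot (wvec_ne_zero i j k (ne_of_lt hij) hik)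
    (wvec_indep hij hik hjk hij' hik' hjk' hne)
  have hcard : (Finset.univ.filter (fun g : Fin d → Bool =>
      rowCond i j k g ∧ rowCond i' j' k' g)).card
      ≤ (Finset.univ : Finset ({z : Fin d // z ≠ x ∧ z ≠ y} → Bool)).card := by
    apply Finset.card_le_card_of_injOn
      (fun (g : Fin d → Bool) (z : {z : Fin d // z ≠ x ∧ z ≠ y}) => g z.1)
      (fun g _ => Finset.mem_univ _)
    intro g hg h hh heq
    simp only [Finset.coe_filter, Set.mem_setOf_eq, Finset.mem_univ, true_and] at hg hh
    set δ : Fin d → ℝ := fun z => toR (g z) - toR (h z) with hδ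
    have hsupp : ∀ z, z ≠ x → z ≠ y → δ z = 0 := by
      intro z hzx hzy
      have := congrFun heq ⟨z, hzx, hzy⟩
      simp only at this
      simp [hδ, this]
    have hsum : ∀ (w : Fin d → ℝ), (∑ z, w z * toR (g z)) = 0 →
        (∑ z, w z * toR (h z)) = 0 → ∑ z, w z * δ z = 0 := by
      intro w h1 h2
      simp only [hδ, mul_sub]
      rw [Finset.sum_sub_distrib, h1, h2, sub_zero]
    have h1 := hsum _ ((rowCond_iff_sum i j k g).1 hg.1) ((rowCond_iff_sum i j k h).1 hh.1)
    have h2 := hsum _ ((rowCond_iff_sum i' j' k' g).1 hg.2)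
      ((rowCond_iff_sum i' j' k' h).1 hh.2)
    have hz := hrig δ hsupp h1 h2
    funext z
    have := hz z
    simp only [hδ, sub_eq_zero] at this
    exact toR_inj this
  calc (Finset.univ.filter (fun g : Fin d → Bool =>
      rowCond i j k g ∧ rowCond i' j' k' g)).card
      ≤ (Finset.univ : Finset ({z : Fin d // z ≠ x ∧ z ≠ y} → Bool)).card := hcard
    _ = 2 ^ (d - 2) := by
      rw [Finset.card_univ, Fintype.card_fun, card_compl2 x y hxy, Fintype.card_bool]

lemma bonferroni {α ι : Type*} [DecidableEq α] [DecidableEq ι] (A : ι → Finset α) (s : Finset ι) :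
    (∑ t ∈ s, ((A t).card : ℤ))
      - ∑ t ∈ s, ∑ t' ∈ s, (if t = t' then 0 else ((A t ∩ A t').card : ℤ))
      ≤ ((s.biUnion A).card : ℤ) := by
  classical
  induction s using Finset.induction_on with
  | empty => simp
  | @insert a s ha ih =>
    rw [Finset.biUnion_insert]
    have hunion : ((A a ∪ s.biUnion A).card : ℤ)
        = (A a).card + ((s.biUnion A).card : ℤ) - ((A a ∩ s.biUnion A).card : ℤ) := by
      have := Finset.card_union_add_card_inter (A a) (s.biUnion A)
      zify at this
      linarith
    have hcap : ((A a ∩ s.biUnion A).card : ℤ) ≤ ∑ t ∈ s, ((A a ∩ A t).card : ℤ) := by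
      rw [Finset.inter_biUnion]
      calc ((s.biUnion fun t => A a ∩ A t).card : ℤ)
          ≤ ((∑ t ∈ s, (A a ∩ A t).card : ℕ) : ℤ) := by
            exact_mod_cast Finset.card_biUnion_le
        _ = ∑ t ∈ s, ((A a ∩ A t).card : ℤ) := by push_cast; rfl
    rw [Finset.sum_insert ha]
    have hdouble : ∑ t ∈ insert a s, ∑ t' ∈ insert a s,
        (if t = t' then 0 else ((A t ∩ A t').card : ℤ))
        = (∑ t' ∈ s, ((A a ∩ A t').card : ℤ)) + (∑ t ∈ s, ((A t ∩ A a).card : ℤ))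
          + ∑ t ∈ s, ∑ t' ∈ s, (if t = t' then 0 else ((A t ∩ A t').card : ℤ)) := by
      rw [Finset.sum_insert ha, Finset.sum_insert ha]
      have h1 : ∑ t' ∈ s, (if a = t' then 0 else ((A a ∩ A t').card : ℤ))
          = ∑ t' ∈ s, ((A a ∩ A t').card : ℤ) := by
        apply Finset.sum_congr rfl
        intro t' ht'
        rw [if_neg]
        intro h; exact ha (h ▸ ht')
      have h2 : ∀ t ∈ s, ∑ t' ∈ insert a s, (if t = t' then 0 else ((A t ∩ A t').card : ℤ))
          = ((A t ∩ A a).card : ℤ)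
            + ∑ t' ∈ s, (if t = t' then 0 else ((A t ∩ A t').card : ℤ)) := by
        intro t ht
        rw [Finset.sum_insert ha, if_neg]
        intro h; exact ha (h.symm ▸ ht)
      rw [if_pos rfl, h1, Finset.sum_congr rfl h2, Finset.sum_add_distrib]
      ring
    rw [hdouble, hunion]
    have hpos : (0:ℤ) ≤ ∑ t ∈ s, ((A t ∩ A a).card : ℤ) :=
      Finset.sum_nonneg fun t _ => Int.natCast_nonneg _
    linarith

lemma card_A {d : ℕ} (i j k : Fin d) (hij : i ≠ j) (hik : i ≠ k) (hjk : j ≠ k) :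
    (Finset.univ.filter (fun M : Matrix (Fin d) (Fin d) Bool =>
      ∀ r, rowCond i j k (fun z => M r z))).card = (3 * 2 ^ (d - 3)) ^ d := by
  rw [← card_row i j k hij hik hjk]
  apply card_matrix_filter
  intro M
  simp only [Finset.mem_filter, Finset.mem_univ, true_and]

lemma card_A_inter {d : ℕ} {i j k i' j' k' : Fin d} (hij : i < j) (hik : i ≠ k) (hjk : j ≠ k)
    (hij' : i' < j') (hik' : i' ≠ k') (hjk' : j' ≠ k') (hne : ¬(i = i' ∧ j = j' ∧ k = k')) :
    ((Finset.univ.filter (fun M : Matrix (Fin d) (Fin d) Bool =>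
        ∀ r, rowCond i j k (fun z => M r z))) ∩
     (Finset.univ.filter (fun M : Matrix (Fin d) (Fin d) Bool =>
        ∀ r, rowCond i' j' k' (fun z => M r z)))).card
      ≤ (2 ^ (d - 2)) ^ d := by
  have h : ((Finset.univ.filter (fun M : Matrix (Fin d) (Fin d) Bool =>
        ∀ r, rowCond i j k (fun z => M r z))) ∩
     (Finset.univ.filter (fun M : Matrix (Fin d) (Fin d) Bool =>
        ∀ r, rowCond i' j' k' (fun z => M r z)))).card
      = (Finset.univ.filter (fun g : Fin d → Bool =>
          rowCond i j k g ∧ rowCond i' j' k' g)).card ^ d := by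
    apply card_matrix_filter
    intro M
    simp only [Finset.mem_inter, Finset.mem_filter, Finset.mem_univ, true_and, ← forall_and]
  rw [h]
  exact Nat.pow_le_pow_left (card_two_rows hij hik hjk hij' hik' hjk' hne) d

set_option maxHeartbeats 1000000 in
lemma main {d : ℕ} (h12 : 12 ≤ d) (hsmall : (d:ℝ)^3 * (2/3:ℝ)^d < 1/128) :
    (1/128 : ℝ) * (d:ℝ)^3 * (3/8:ℝ)^d ≤ prob3col d ∧
      prob3col d ≤ 1 * (d:ℝ)^3 * (3/8:ℝ)^d := by
  classical
  set A : Fin d × Fin d × Fin d → Finset (Matrix (Fin d) (Fin d) Bool) :=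
    fun t => Finset.univ.filter (fun M => ∀ r, rowCond t.1 t.2.1 t.2.2 (fun z => M r z))
    with hA
  set E : Finset (Matrix (Fin d) (Fin d) Bool) :=
    Finset.univ.filter (fun M =>
      ∃ i j k : Fin d, i ≠ j ∧ i ≠ k ∧ j ≠ k ∧
        (bmToR M)ᵀ i + (bmToR M)ᵀ j = (bmToR M)ᵀ k) with hEdef
  have hprob : prob3col d = (E.card : ℝ) / 2 ^ (d * d) := rfl
  set sall := Finset.univ.filter (fun t : Fin d × Fin d × Fin d =>
      t.1 ≠ t.2.1 ∧ t.1 ≠ t.2.2 ∧ t.2.1 ≠ t.2.2) with hsall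
  set s1 := Finset.univ.filter (fun t : Fin d × Fin d × Fin d =>
      t.1 < t.2.1 ∧ t.1 ≠ t.2.2 ∧ t.2.1 ≠ t.2.2) with hs1
  have hposD : (0:ℝ) < 2 ^ (d * d) := by positivity
  have huniv : (Finset.univ : Finset (Fin d × Fin d × Fin d)).card = d ^ 3 := by
    simp [Finset.card_univ]; ring
  -- upper bound on E.card
  have hEsub : E ⊆ sall.biUnion A := by
    intro M hM
    simp only [hEdef, Finset.mem_filter, Finset.mem_univ, true_and] at hM
    obtain ⟨i, j, k, hij, hik, hjk, hcol⟩ := hM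
    rw [Finset.mem_biUnion]
    refine ⟨(i, j, k), ?_, ?_⟩
    · simp [hsall, hij, hik, hjk]
    · simp only [hA, Finset.mem_filter, Finset.mem_univ, true_and]
      exact (colEq_iff M i j k).1 hcol
  have hcardA : ∀ t ∈ sall, (A t).card = (3 * 2 ^ (d - 3)) ^ d := by
    intro t ht
    simp only [hsall, Finset.mem_filter, Finset.mem_univ, true_and] at ht
    exact card_A t.1 t.2.1 t.2.2 ht.1 ht.2.1 ht.2.2
  have hupperN : E.card ≤ d ^ 3 * (3 * 2 ^ (d - 3)) ^ d := by
    calc E.card ≤ (sall.biUnion A).card := Finset.card_le_card hEsub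
      _ ≤ ∑ t ∈ sall, (A t).card := Finset.card_biUnion_le
      _ = sall.card * (3 * 2 ^ (d - 3)) ^ d := by
          rw [Finset.sum_congr rfl hcardA, Finset.sum_const, smul_eq_mul]
      _ ≤ d ^ 3 * (3 * 2 ^ (d - 3)) ^ d := by
          apply Nat.mul_le_mul_right
          rw [← huniv]
          exact Finset.card_le_univ _
  -- lower bound on E.card
  have hs1sub : s1.biUnion A ⊆ E := by
    intro M hM
    rw [Finset.mem_biUnion] at hM
    obtain ⟨t, ht, hMt⟩ := hM
    simp only [hs1, Finset.mem_filter, Finset.mem_univ, true_and] at ht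
    simp only [hA, Finset.mem_filter, Finset.mem_univ, true_and] at hMt
    simp only [hEdef, Finset.mem_filter, Finset.mem_univ, true_and]
    exact ⟨t.1, t.2.1, t.2.2, ne_of_lt ht.1, ht.2.1, ht.2.2, (colEq_iff M _ _ _).2 hMt⟩
  have hS1 : ∑ t ∈ s1, ((A t).card : ℤ)
      = (s1.card : ℤ) * ((3 * 2 ^ (d - 3)) ^ d : ℕ) := by
    have hterm : ∀ t ∈ s1, ((A t).card : ℤ) = (((3 * 2 ^ (d - 3)) ^ d : ℕ) : ℤ) := by
      intro t ht
      simp only [hs1, Finset.mem_filter, Finset.mem_univ, true_and] at ht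
      exact_mod_cast card_A t.1 t.2.1 t.2.2 (ne_of_lt ht.1) ht.2.1 ht.2.2
    rw [Finset.sum_congr rfl hterm, Finset.sum_const, nsmul_eq_mul]
  have hS2 : ∑ t ∈ s1, ∑ t' ∈ s1, (if t = t' then 0 else ((A t ∩ A t').card : ℤ))
      ≤ (s1.card : ℤ) * s1.card * ((2 ^ (d - 2)) ^ d : ℕ) := by
    calc ∑ t ∈ s1, ∑ t' ∈ s1, (if t = t' then 0 else ((A t ∩ A t').card : ℤ))
        ≤ ∑ _t ∈ s1, ∑ _t' ∈ s1, (((2 ^ (d - 2)) ^ d : ℕ) : ℤ) := by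
          apply Finset.sum_le_sum; intro t ht; apply Finset.sum_le_sum; intro t' ht'
          by_cases h : t = t'
          · rw [if_pos h]; positivity
          · rw [if_neg h]
            simp only [hs1, Finset.mem_filter, Finset.mem_univ, true_and] at ht ht'
            have hne : ¬(t.1 = t'.1 ∧ t.2.1 = t'.2.1 ∧ t.2.2 = t'.2.2) := by
              intro hcontra
              exact h (Prod.ext hcontra.1 (Prod.ext hcontra.2.1 hcontra.2.2))
            exact_mod_cast card_A_inter ht.1 ht.2.1 ht.2.2 ht'.1 ht'.2.1 ht'.2.2 hne
      _ = (s1.card : ℤ) * s1.card * ((2 ^ (d - 2)) ^ d : ℕ) := by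
          rw [Finset.sum_const, Finset.sum_const]
          push_cast
          ring
  have hlowerN : (s1.card : ℤ) * ((3 * 2 ^ (d - 3)) ^ d : ℕ)
      - (s1.card : ℤ) * s1.card * ((2 ^ (d - 2)) ^ d : ℕ) ≤ (E.card : ℤ) := by
    have hle : ((s1.biUnion A).card : ℤ) ≤ (E.card : ℤ) := by
      exact_mod_cast Finset.card_le_card hs1sub
    have hbon := bonferroni A s1
    rw [hS1] at hbon
    linarith [hS2]
  -- cardinality of s1 from below
  set q := d / 3 with hq
  have hdm := Nat.div_add_mod d 3
  have hmod := Nat.mod_lt d (show 0 < 3 by norm_num)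
  have hq3 : 3 * q ≤ d := by omega
  have hq4 : d < 3 * q + 3 := by omega
  have hT : q * q * q ≤ s1.card := by
    have hcardle : ((Finset.univ : Finset (Fin q × Fin q × Fin q))).card ≤ s1.card := by
      apply Finset.card_le_card_of_injOn
        (fun p => ((⟨p.1.1, by have := p.1.isLt; omega⟩ : Fin d),
          (⟨q + p.2.1.1, by have := p.2.1.isLt; omega⟩ : Fin d),
          (⟨2*q + p.2.2.1, by have := p.2.2.isLt; omega⟩ : Fin d)))
      · intro p _
        simp only [Finset.mem_coe, hs1, Finset.mem_filter, Finset.mem_univ, true_and]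
        refine ⟨?_, ?_, ?_⟩
        · simp only [Fin.mk_lt_mk]
          have := p.1.isLt; omega
        · simp only [ne_eq, Fin.mk.injEq]
          have := p.1.isLt; have := p.2.2.isLt; omega
        · simp only [ne_eq, Fin.mk.injEq]
          have := p.2.1.isLt; omega
      · intro p _ p' _ h
        obtain ⟨⟨a, ha⟩, ⟨b, hb⟩, ⟨c, hc⟩⟩ := p
        obtain ⟨⟨a', ha'⟩, ⟨b', hb'⟩, ⟨c', hc'⟩⟩ := p'
        simp only [Prod.mk.injEq, Fin.mk.injEq] at h
        simp only [Prod.mk.injEq, Fin.mk.injEq]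
        omega
    calc q * q * q = ((Finset.univ : Finset (Fin q × Fin q × Fin q))).card := by
          simp [Finset.card_univ]; ring
      _ ≤ s1.card := hcardle
  have hTub : s1.card ≤ d ^ 3 := by
    rw [← huniv]; exact Finset.card_le_univ _
  -- real versions
  have hexp3 : (d-3)*d + 3*d = d*d := by
    obtain ⟨e, rfl⟩ : ∃ e, d = e + 3 := ⟨d-3, by omega⟩
    simp [Nat.add_sub_cancel]
    ring
  have hexp2 : (d-2)*d + 2*d = d*d := by
    obtain ⟨e, rfl⟩ : ∃ e, d = e + 2 := ⟨d-2, by omega⟩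
    simp [Nat.add_sub_cancel]
    ring
  have hN1 : ((3:ℝ) * 2 ^ (d - 3)) ^ d = (3/8:ℝ)^d * 2^(d*d) := by
    have h8 : (8:ℝ)^d = 2^(3*d) := by rw [pow_mul]; norm_num
    rw [mul_pow, ← pow_mul, div_pow, ← hexp3, pow_add, h8]
    field_simp
  have hM2 : ((2:ℝ) ^ (d - 2)) ^ d = (1/4:ℝ)^d * 2^(d*d) := by
    have h4 : (4:ℝ)^d = 2^(2*d) := by rw [pow_mul]; norm_num
    rw [← pow_mul, div_pow, ← hexp2, pow_add, h4]
    field_simp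
    simp
  have hEupperR : (E.card : ℝ) ≤ (d:ℝ)^3 * ((3:ℝ) * 2 ^ (d - 3)) ^ d := by
    have h := (Nat.cast_le (α := ℝ)).2 hupperN
    push_cast at h
    exact h
  have hElowerR : (s1.card:ℝ) * ((3:ℝ) * 2 ^ (d - 3)) ^ d
      - (s1.card:ℝ) * (s1.card:ℝ) * ((2:ℝ) ^ (d - 2)) ^ d ≤ (E.card : ℝ) := by
    have h := (Int.cast_le (R := ℝ)).2 hlowerN
    push_cast at h
    exact h
  have hTubR : (s1.card:ℝ) ≤ (d:ℝ)^3 := by exact_mod_cast hTub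
  have hTlbR : (d:ℝ)^3 / 64 ≤ (s1.card:ℝ) := by
    have hd4 : d ≤ 4 * q := by omega
    have hd4R : (d:ℝ) ≤ 4 * (q:ℝ) := by exact_mod_cast hd4
    have hqT : (q:ℝ) * q * q ≤ (s1.card:ℝ) := by exact_mod_cast hT
    have hcube : ((d:ℝ))^3 ≤ (4*(q:ℝ))^3 :=
      pow_le_pow_left₀ (Nat.cast_nonneg d) hd4R 3
    nlinarith [hcube, hqT]
  have hP : (0:ℝ) < (3/8:ℝ)^d := by positivity
  have hs0 : (0:ℝ) ≤ (2/3:ℝ)^d := by positivity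
  have hQ : (1/4:ℝ)^d = (3/8:ℝ)^d * (2/3:ℝ)^d := by
    rw [← mul_pow]; norm_num
  have hT0 : (0:ℝ) ≤ (s1.card:ℝ) := Nat.cast_nonneg _
  -- core inequality
  have hcore : (1/128:ℝ) * (d:ℝ)^3 * (3/8:ℝ)^d
      ≤ (s1.card:ℝ) * (3/8:ℝ)^d - (s1.card:ℝ) * (s1.card:ℝ) * (1/4:ℝ)^d := by
    have h1 : (s1.card:ℝ) * (s1.card:ℝ) * (2/3:ℝ)^d
        ≤ (d:ℝ)^3 * ((d:ℝ)^3 * (2/3:ℝ)^d) := by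
      have hTT : (s1.card:ℝ) * (s1.card:ℝ) ≤ (d:ℝ)^3 * (d:ℝ)^3 :=
        mul_le_mul hTubR hTubR hT0 (by positivity)
      nlinarith [mul_le_mul_of_nonneg_right hTT hs0]
    have h2 : (d:ℝ)^3 * ((d:ℝ)^3 * (2/3:ℝ)^d) ≤ (d:ℝ)^3 * (1/128) := by
      apply mul_le_mul_of_nonneg_left (le_of_lt hsmall) (by positivity)
    have h3 : (s1.card:ℝ) * (s1.card:ℝ) * (1/4:ℝ)^d
        ≤ (d:ℝ)^3 * (1/128) * (3/8:ℝ)^d := by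
      rw [hQ]
      calc (s1.card:ℝ) * (s1.card:ℝ) * ((3/8:ℝ)^d * (2/3:ℝ)^d)
          = ((s1.card:ℝ) * (s1.card:ℝ) * (2/3:ℝ)^d) * (3/8:ℝ)^d := by ring
        _ ≤ ((d:ℝ)^3 * (1/128)) * (3/8:ℝ)^d := by
            apply mul_le_mul_of_nonneg_right (le_trans h1 h2) (le_of_lt hP)
    have h4 : (d:ℝ)^3 / 64 * (3/8:ℝ)^d ≤ (s1.card:ℝ) * (3/8:ℝ)^d :=
      mul_le_mul_of_nonneg_right hTlbR (le_of_lt hP)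
    nlinarith
  constructor
  · rw [hprob, le_div_iff₀ hposD]
    calc (1/128:ℝ) * (d:ℝ)^3 * (3/8:ℝ)^d * 2^(d*d)
        ≤ ((s1.card:ℝ) * (3/8:ℝ)^d - (s1.card:ℝ) * (s1.card:ℝ) * (1/4:ℝ)^d) * 2^(d*d) := by
          apply mul_le_mul_of_nonneg_right hcore (le_of_lt hposD)
      _ = (s1.card:ℝ) * ((3/8:ℝ)^d * 2^(d*d))
          - (s1.card:ℝ) * (s1.card:ℝ) * ((1/4:ℝ)^d * 2^(d*d)) := by ring
      _ = (s1.card:ℝ) * ((3:ℝ) * 2 ^ (d - 3)) ^ d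
          - (s1.card:ℝ) * (s1.card:ℝ) * ((2:ℝ) ^ (d - 2)) ^ d := by
          rw [hN1, hM2]
      _ ≤ (E.card : ℝ) := hElowerR
  · rw [hprob, div_le_iff₀ hposD]
    calc (E.card : ℝ) ≤ (d:ℝ)^3 * ((3:ℝ) * 2 ^ (d - 3)) ^ d := hEupperR
      _ = (d:ℝ)^3 * ((3/8:ℝ)^d * 2^(d*d)) := by rw [hN1]
      _ = 1 * (d:ℝ)^3 * (3/8:ℝ)^d * 2^(d*d) := by ring

end Stmt19

/-- The probability that a random `d × d` 0/1-matrix has three pairwise distinct columns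
with `mᵢ + mⱼ = mₖ` is `Θ(d^3 (3/8)^d)`. -/
theorem stmt19 : ∃ c C : ℝ, 0 < c ∧ c ≤ C ∧ ∃ d0 : ℕ, ∀ d : ℕ, d0 ≤ d →
    c * (d : ℝ) ^ 3 * (3 / 8 : ℝ) ^ d ≤ prob3col d ∧
      prob3col d ≤ C * (d : ℝ) ^ 3 * (3 / 8 : ℝ) ^ d := by
  have htend := tendsto_pow_const_mul_const_pow_of_lt_one 3
    (by norm_num : (0:ℝ) ≤ 2/3) (by norm_num : (2/3:ℝ) < 1)
  have hev : ∀ᶠ n : ℕ in atTop, (n:ℝ)^3 * (2/3:ℝ)^n < 1/128 :=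
    htend.eventually_lt_const (by norm_num : (0:ℝ) < 1/128)
  obtain ⟨d0, hd0⟩ := Filter.eventually_atTop.1 (hev.and (eventually_ge_atTop 12))
  refine ⟨1/128, 1, by norm_num, by norm_num, d0, fun d hd => ?_⟩
  obtain ⟨hsmall, h12⟩ := hd0 d hd
  exact Stmt19.main h12 hsmall
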